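/- In the setting of the previous statement, assume additionally that φ is C² on (0, b₁) with φ'' < 0, and define p = 1 + r₁r₂φ''(r₁)/(φ'(r₁)(r₂ - r₁φ'(r₁))). Let s* be the s-parameter of the polar curve at the image point T(r₁, r₂), and p∘T the osculating exponent of the polar curve at T(r₁, r₂). Then s∘T = s and 1/p + 1/(p∘T) = 1. -/

import Mathlib

open Set

/-- Relations (7.8) and (7.9) of the duality theorem: if the polar curve
(the graph of `ψ`, whose points `(x,y)` satisfy `x·r₁ + y·r₂ = 1`, i.e.
`ψ(s/r₁) = (1-s)/r₂` along the original curve) has `s`-parameter `s*` and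
osculating exponent `p∘T` at the image point, then `s* = s` and
`1/p + 1/(p∘T) = 1`. -/
theorem polar_duality_s_and_p
    (b₁ : ℝ) (hb₁ : 0 < b₁)
    (φ φ' φ'' : ℝ → ℝ)
    (hderiv : ∀ r ∈ Ioo 0 b₁, HasDerivAt φ (φ' r) r)
    (hderiv2 : ∀ r ∈ Ioo 0 b₁, HasDerivAt φ' (φ'' r) r)
    (hφpos : ∀ r ∈ Ioo 0 b₁, 0 < φ r)
    (hφ'neg : ∀ r ∈ Ioo 0 b₁, φ' r < 0)
    (hφ''neg : ∀ r ∈ Ioo 0 b₁, φ'' r < 0)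
    (sfun : ℝ → ℝ)
    (hsfun : ∀ r, sfun r = -r * φ' r / (φ r - r * φ' r))
    (r₁ : ℝ) (hr₁ : r₁ ∈ Ioo 0 b₁)
    (r₂ s p xstar : ℝ)
    (hr₂ : r₂ = φ r₁) (hsdef : s = sfun r₁)
    (hp : p = 1 + r₁ * r₂ * φ'' r₁ / (φ' r₁ * (r₂ - r₁ * φ' r₁)))
    (hxstar : xstar = s / r₁)
    (ψ ψ' : ℝ → ℝ) (ψ''v : ℝ)
    -- the polar curve is the graph of ψ: ψ(s(r)/r) = (1 - s(r))/φ(r)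
    (hgraph : ∀ r ∈ Ioo 0 b₁, ψ (sfun r / r) = (1 - sfun r) / φ r)
    (hψderiv : ∀ r ∈ Ioo 0 b₁, HasDerivAt ψ (ψ' (sfun r / r)) (sfun r / r))
    (hψderiv2 : HasDerivAt ψ' ψ''v xstar)
    (sstar pT : ℝ)
    (hsstar : sstar = -xstar * ψ' xstar / (ψ xstar - xstar * ψ' xstar))
    (hpT : pT = 1 + xstar * ψ xstar * ψ''v /
      (ψ' xstar * (ψ xstar - xstar * ψ' xstar))) :
    sstar = s ∧ 1 / p + 1 / pT = 1 := by
  have hopen : IsOpen (Ioo (0:ℝ) b₁) := isOpen_Ioo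
  have hD : ∀ r ∈ Ioo 0 b₁, 0 < φ r - r * φ' r := by
    intro r hr
    have h1 := hφpos r hr
    have h2 := hφ'neg r hr
    nlinarith [hr.1]
  -- sfun r / r = -φ'/D on Ioo
  have hXF : ∀ r ∈ Ioo 0 b₁, sfun r / r = -φ' r / (φ r - r * φ' r) := by
    intro r hr
    have hr0 : r ≠ 0 := ne_of_gt hr.1
    have hD' : φ r - r * φ' r ≠ 0 := (hD r hr).ne'
    rw [hsfun]
    field_simp
  -- (1 - sfun r)/φ r = 1/D on Ioo
  have hYG : ∀ r ∈ Ioo 0 b₁, (1 - sfun r) / φ r = 1 / (φ r - r * φ' r) := by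
    intro r hr
    have hD' : φ r - r * φ' r ≠ 0 := (hD r hr).ne'
    have hφ0 : φ r ≠ 0 := (hφpos r hr).ne'
    rw [hsfun]
    field_simp
    ring
  -- derivative of D
  have hDder : ∀ r ∈ Ioo 0 b₁,
      HasDerivAt (fun t => φ t - t * φ' t) (-(r * φ'' r)) r := by
    intro r hr
    have h : HasDerivAt (fun t => φ t - t * φ' t) _ r := (hderiv r hr).sub ((hasDerivAt_id r).mul (hderiv2 r hr))
    convert h using 1
    simp only [id_eq]
    ring
  -- derivative of x(r) = sfun r / r
  have hXder : ∀ r ∈ Ioo 0 b₁, HasDerivAt (fun t => sfun t / t)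
      (-(φ'' r * φ r) / (φ r - r * φ' r) ^ 2) r := by
    intro r hr
    have hD' : φ r - r * φ' r ≠ 0 := (hD r hr).ne'
    have h : HasDerivAt (fun t => -φ' t / (φ t - t * φ' t)) _ r := ((hderiv2 r hr).neg).div (hDder r hr) hD'
    have h2 : HasDerivAt (fun t => -φ' t / (φ t - t * φ' t))
        (-(φ'' r * φ r) / (φ r - r * φ' r) ^ 2) r := by
      convert h using 1
      simp only [Pi.neg_apply]
      try ring
    apply h2.congr_of_eventuallyEq
    filter_upwards [hopen.mem_nhds hr] with t ht
    exact hXF t ht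
  -- derivative of y(r) = (1 - sfun r)/φ r
  have hYder : ∀ r ∈ Ioo 0 b₁, HasDerivAt (fun t => (1 - sfun t) / φ t)
      (r * φ'' r / (φ r - r * φ' r) ^ 2) r := by
    intro r hr
    have hD' : φ r - r * φ' r ≠ 0 := (hD r hr).ne'
    have h : HasDerivAt (fun t => 1 / (φ t - t * φ' t)) _ r := (hasDerivAt_const r (1:ℝ)).div (hDder r hr) hD'
    have h2 : HasDerivAt (fun t => 1 / (φ t - t * φ' t))
        (r * φ'' r / (φ r - r * φ' r) ^ 2) r := by
      convert h using 1
      field_simp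
      try ring
    apply h2.congr_of_eventuallyEq
    filter_upwards [hopen.mem_nhds hr] with t ht
    exact hYG t ht
  -- first key identity: ψ'(x(r)) = -r/φ(r)
  have hψ'val : ∀ r ∈ Ioo 0 b₁, ψ' (sfun r / r) = -r / φ r := by
    intro r hr
    have hφ0 : φ r ≠ 0 := (hφpos r hr).ne'
    have hD' : φ r - r * φ' r ≠ 0 := (hD r hr).ne'
    have hD2 : (φ r - r * φ' r) ^ 2 ≠ 0 := pow_ne_zero _ hD'
    have he : φ'' r ≠ 0 := (hφ''neg r hr).ne
    have hcomp : HasDerivAt (ψ ∘ fun t => sfun t / t)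
        (ψ' (sfun r / r) * (-(φ'' r * φ r) / (φ r - r * φ' r) ^ 2)) r :=
      HasDerivAt.comp r (hψderiv r hr) (hXder r hr)
    have hcomp' : HasDerivAt (fun t => (1 - sfun t) / φ t)
        (ψ' (sfun r / r) * (-(φ'' r * φ r) / (φ r - r * φ' r) ^ 2)) r := by
      apply hcomp.congr_of_eventuallyEq
      filter_upwards [hopen.mem_nhds hr] with t ht
      exact (hgraph t ht).symm
    have huniq := hcomp'.unique (hYder r hr)
    rw [← mul_div_assoc, div_eq_div_iff hD2 hD2] at huniq
    have h1 := mul_right_cancel₀ hD2 huniq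
    have h2 : ψ' (sfun r / r) * -(φ r) * φ'' r = r * φ'' r := by
      linear_combination h1
    have h3 := mul_right_cancel₀ he h2
    rw [eq_div_iff hφ0]
    linear_combination -h3
  -- xstar equals sfun r₁ / r₁
  have hxX : xstar = sfun r₁ / r₁ := by rw [hxstar, hsdef]
  have ha0 : φ r₁ ≠ 0 := (hφpos r₁ hr₁).ne'
  have hD1 : 0 < φ r₁ - r₁ * φ' r₁ := hD r₁ hr₁
  have hD1' : φ r₁ - r₁ * φ' r₁ ≠ 0 := hD1.ne'
  have hD2' : (φ r₁ - r₁ * φ' r₁) ^ 2 ≠ 0 := pow_ne_zero _ hD1'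
  have ha2 : (φ r₁) ^ 2 ≠ 0 := pow_ne_zero _ ha0
  have he1 : φ'' r₁ ≠ 0 := (hφ''neg r₁ hr₁).ne
  have hd1 : φ' r₁ ≠ 0 := (hφ'neg r₁ hr₁).ne
  have hr10 : r₁ ≠ 0 := ne_of_gt hr₁.1
  -- second key identity: ψ''v = D³/(φ³ φ'')
  have hHder : HasDerivAt (fun t => ψ' (sfun t / t))
      (ψ''v * (-(φ'' r₁ * φ r₁) / (φ r₁ - r₁ * φ' r₁) ^ 2)) r₁ := by
    have h := hψderiv2
    rw [hxX] at h
    have hc : HasDerivAt (ψ' ∘ fun t => sfun t / t)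
        (ψ''v * (-(φ'' r₁ * φ r₁) / (φ r₁ - r₁ * φ' r₁) ^ 2)) r₁ :=
      HasDerivAt.comp r₁ h (hXder r₁ hr₁)
    exact hc
  have hHder2 : HasDerivAt (fun t => -t / φ t)
      ((-(φ r₁) + r₁ * φ' r₁) / (φ r₁) ^ 2) r₁ := by
    have h : HasDerivAt (fun t => -t / φ t) _ r₁ := ((hasDerivAt_id r₁).neg).div (hderiv r₁ hr₁) ha0
    convert h using 1
    simp only [Pi.neg_apply, id_eq]
    ring
  have hHder' : HasDerivAt (fun t => ψ' (sfun t / t))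
      ((-(φ r₁) + r₁ * φ' r₁) / (φ r₁) ^ 2) r₁ := by
    apply hHder2.congr_of_eventuallyEq
    filter_upwards [hopen.mem_nhds hr₁] with t ht
    exact hψ'val t ht
  have huniq2 := hHder.unique hHder'
  rw [← mul_div_assoc, div_eq_div_iff hD2' ha2] at huniq2
  have hψ'' : ψ''v = (φ r₁ - r₁ * φ' r₁) ^ 3 / ((φ r₁) ^ 3 * φ'' r₁) := by
    rw [eq_div_iff (mul_ne_zero (pow_ne_zero 3 ha0) he1)]
    linear_combination -huniq2
  -- values at the image point
  have hx : xstar = -φ' r₁ / (φ r₁ - r₁ * φ' r₁) := by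
    rw [hxX]; exact hXF r₁ hr₁
  have hψx : ψ xstar = 1 / (φ r₁ - r₁ * φ' r₁) := by
    rw [hxX, hgraph r₁ hr₁]; exact hYG r₁ hr₁
  have hψ'x : ψ' xstar = -r₁ / φ r₁ := by
    rw [hxX]; exact hψ'val r₁ hr₁
  have hden : ψ xstar - xstar * ψ' xstar = 1 / φ r₁ := by
    rw [hψx, hψ'x, hx]
    field_simp
    try ring
    try tauto
  -- (7.8): s* = s
  have hss : sstar = s := by
    rw [hsstar, hden, hψ'x, hx, hsdef, hsfun]
    field_simp
  refine ⟨hss, ?_⟩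
  -- (7.9): 1/p + 1/pT = 1
  have hpT' : pT = 1 + φ' r₁ * (φ r₁ - r₁ * φ' r₁) / (r₁ * φ r₁ * φ'' r₁) := by
    rw [hpT, hden, hψx, hψ'x, hψ'', hx]
    field_simp
  set A : ℝ := r₁ * φ r₁ * φ'' r₁ / (φ' r₁ * (φ r₁ - r₁ * φ' r₁)) with hAdef
  have hpA : p = 1 + A := by rw [hp, hr₂]
  have hpTA : pT = 1 + 1 / A := by rw [hpT', hAdef, one_div_div]
  have hApos : 0 < A := by
    apply div_pos_of_neg_of_neg
    · exact mul_neg_of_pos_of_neg (mul_pos hr₁.1 (hφpos r₁ hr₁)) (hφ''neg r₁ hr₁)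
    · exact mul_neg_of_neg_of_pos (hφ'neg r₁ hr₁) hD1
  have hA0 : A ≠ 0 := ne_of_gt hApos
  have h1A : (1:ℝ) + A ≠ 0 := by positivity
  rw [hpA, hpTA]
  field_simp
  ring
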